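/- For all natural numbers a and all integers n ≥ 1, the Stern polynomials satisfy B_{2^a·n - 1}(t) = (∑_{j=0}^{a-1} t^j)·B_n(t) + B_{n-1}(t) and B_{2^a·n + 1}(t) = (∑_{j=0}^{a-1} t^j)·B_n(t) + B_{n+1}(t). -/

import Mathlib

open Polynomial

/-- The Stern polynomials: `B 0 = 0`, `B 1 = 1`, `B (2n) = t * B n`,
`B (2n+1) = B n + B (n+1)`. -/
noncomputable def stern : ℕ → Polynomial ℤ
  | 0 => 0
  | 1 => 1
  | n + 2 =>
    if _h : n % 2 = 0 then
      X * stern (n / 2 + 1)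
    else
      stern (n / 2 + 1) + stern (n / 2 + 2)
  decreasing_by all_goals omega

lemma stern_two_mul (k : ℕ) : stern (2 * k) = X * stern k := by
  match k with
  | 0 => simp [stern]
  | k + 1 =>
    rw [show 2 * (k + 1) = 2 * k + 2 by ring, stern]
    have h : 2 * k % 2 = 0 := by omega
    rw [dif_pos h]
    congr 2
    omega

lemma stern_two_mul_add_one (k : ℕ) : stern (2 * k + 1) = stern k + stern (k + 1) := by
  match k with
  | 0 => simp [stern]
  | k + 1 =>
    rw [show 2 * (k + 1) + 1 = (2 * k + 1) + 2 by ring, stern]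
    have h : ¬ (2 * k + 1) % 2 = 0 := by omega
    rw [dif_neg h]
    congr 2 <;> omega

lemma stern_pow_mul (a n : ℕ) : stern (2 ^ a * n) = X ^ a * stern n := by
  induction a with
  | zero => simp
  | succ a ih =>
    rw [show 2 ^ (a + 1) * n = 2 * (2 ^ a * n) by ring, stern_two_mul, ih]
    ring

theorem stern_pow_two_mul_sub_one_add_one (a n : ℕ) (hn : 1 ≤ n) :
    stern (2 ^ a * n - 1) =
      (∑ j ∈ Finset.range a, X ^ j) * stern n + stern (n - 1) ∧
    stern (2 ^ a * n + 1) =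
      (∑ j ∈ Finset.range a, X ^ j) * stern n + stern (n + 1) := by
  induction a with
  | zero => simp
  | succ a ih =>
    obtain ⟨ih1, ih2⟩ := ih
    have hN : 1 ≤ 2 ^ a * n := Nat.one_le_iff_ne_zero.mpr (by positivity)
    have e1 : 2 ^ (a + 1) * n - 1 = 2 * (2 ^ a * n - 1) + 1 := by
      have : 2 ^ (a + 1) * n = 2 * (2 ^ a * n) := by ring
      omega
    have e2 : 2 ^ a * n - 1 + 1 = 2 ^ a * n := by omega
    have e3 : 2 ^ (a + 1) * n + 1 = 2 * (2 ^ a * n) + 1 := by ring_nf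
    have hsum : ∑ j ∈ Finset.range (a + 1), (X : Polynomial ℤ) ^ j =
        (∑ j ∈ Finset.range a, X ^ j) + X ^ a := Finset.sum_range_succ _ _
    constructor
    · rw [e1, stern_two_mul_add_one, e2, ih1, stern_pow_mul, hsum]
      ring
    · rw [e3, stern_two_mul_add_one, ih2, stern_pow_mul, hsum]
      ring
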